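/- Let ψ be a stack W-operator and let ψ̃ = F⁻¹(ψ) be its characteristic set operator. Then ψ is an erosion (i.e., for every index type I and every family (f_i)_{i∈I} of grey-scale images, ψ(⨅_{i∈I} f_i) = ⨅_{i∈I} ψ(f_i), where infima are taken pointwise in the complete lattice of grey-scale images) if, and only if, ψ̃ is an erosion on binary images (i.e., ψ̃(⨅_{i∈I} X_i) = ⨅_{i∈I} ψ̃(X_i) for every family of binary images). -/

import Mathlib

namespace StackMM

variable {E : Type*}

/-- A grey-scale image with maximal intensity `m`. -/
def IsGrey (m : ℕ) (f : E → ℕ) : Prop := ∀ x, f x ≤ m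

/-- A binary image. -/
def IsBinary (X : E → ℕ) : Prop := ∀ x, X x ≤ 1

/-- The threshold (cross-section) of `f` at level `t`. -/
def thresh (t : ℕ) (f : E → ℕ) : E → ℕ := fun x => if t ≤ f x then 1 else 0

/-- An image operator maps grey-scale images to grey-scale images. -/
def IsImageOp (m : ℕ) (ψ : (E → ℕ) → E → ℕ) : Prop :=
  ∀ f, IsGrey m f → IsGrey m (ψ f)

/-- A set operator maps binary images to binary images. -/
def IsSetOp (ψ : (E → ℕ) → E → ℕ) : Prop :=
  ∀ X, IsBinary X → IsBinary (ψ X)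

/-- A stack operator: an image operator mapping grey-scale binary images to grey-scale
binary images which commutes in average with cross-sectioning. -/
def IsStackOp (m : ℕ) (ψ : (E → ℕ) → E → ℕ) : Prop :=
  IsImageOp m ψ ∧
  (∀ X : E → ℕ, IsBinary X → ∀ x, ψ (fun y => m * X y) x = 0 ∨ ψ (fun y => m * X y) x = m) ∧
  (∀ f : E → ℕ, IsGrey m f → ∀ x,
    m * ψ f x = ∑ t ∈ Finset.Icc 1 m, ψ (fun y => m * thresh t f y) x)

/-- `F⁻¹` : the characteristic set operator of a stack operator. -/
def charOp (m : ℕ) (ψ : (E → ℕ) → E → ℕ) : (E → ℕ) → E → ℕ :=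
  fun X x => ψ (fun y => m * X y) x / m

/-- `F` : the stack operator associated with a set operator. -/
def stackOf (m : ℕ) (ψt : (E → ℕ) → E → ℕ) : (E → ℕ) → E → ℕ :=
  fun f x => ∑ t ∈ Finset.Icc 1 m, ψt (thresh t f) x

/-- Restriction of the image `f` to the binary image `V`. -/
def restrictTo (V f : E → ℕ) : E → ℕ := fun y => if V y = 1 then f y else 0

/-- `X` is supported in `χ(W) = {x : W x = 1}`. -/
def SuppIn (W X : E → ℕ) : Prop := ∀ x, W x ≠ 1 → X x = 0

/-- Pointwise infimum of a family in the complete lattice of images bounded by `c`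
(the infimum of the empty family is the top element, the constant image `c`). -/
noncomputable def famInf (c : ℕ) {I : Type} (F : I → E → ℕ) : E → ℕ :=
  fun x => sInf (insert c (Set.range fun i => F i x))

/-- Pointwise supremum of a family in the complete lattice of images bounded by `c`
(the supremum of the empty family is the bottom element, the constant image `0`). -/
noncomputable def famSup {I : Type} (F : I → E → ℕ) : E → ℕ :=
  fun x => sSup (insert 0 (Set.range fun i => F i x))

/-- Erosion on the complete lattice of images bounded by `c` : commutes with infima. -/
def ErosionOn (c : ℕ) (ψ : (E → ℕ) → E → ℕ) : Prop :=
  ∀ (I : Type) (F : I → E → ℕ), (∀ i x, F i x ≤ c) →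
    ψ (famInf c F) = famInf c fun i => ψ (F i)

/-- Dilation : maps suprema to suprema. -/
def DilationOn (c : ℕ) (ψ : (E → ℕ) → E → ℕ) : Prop :=
  ∀ (I : Type) (F : I → E → ℕ), (∀ i x, F i x ≤ c) →
    ψ (famSup F) = famSup fun i => ψ (F i)

/-- Anti-dilation : maps suprema to infima. -/
def AntiDilationOn (c : ℕ) (ψ : (E → ℕ) → E → ℕ) : Prop :=
  ∀ (I : Type) (F : I → E → ℕ), (∀ i x, F i x ≤ c) →
    ψ (famSup F) = famInf c fun i => ψ (F i)

/-- Anti-erosion : maps infima to suprema. -/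
def AntiErosionOn (c : ℕ) (ψ : (E → ℕ) → E → ℕ) : Prop :=
  ∀ (I : Type) (F : I → E → ℕ), (∀ i x, F i x ≤ c) →
    ψ (famInf c F) = famSup fun i => ψ (F i)

variable [AddCommGroup E]

/-- Translation invariance (on images satisfying `P`) : `ψ (f ∘ τ_h) = ψ f ∘ τ_h`. -/
def TransInvOn (P : (E → ℕ) → Prop) (ψ : (E → ℕ) → E → ℕ) : Prop :=
  ∀ f : E → ℕ, P f → ∀ h : E, ψ (fun y => f (y + h)) = fun x => ψ f (x + h)

/-- Locally defined within the window `W` : `ψ f x = ψ (f|_{W ∘ τ_{-x}}) x`. -/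
def LocalOn (P : (E → ℕ) → Prop) (W : E → ℕ) (ψ : (E → ℕ) → E → ℕ) : Prop :=
  ∀ f : E → ℕ, P f → ∀ x : E, ψ f x = ψ (restrictTo (fun y => W (y - x)) f) x

/-- An image W-operator : translation-invariant and locally defined within `W`. -/
def IsWOp (m : ℕ) (W : E → ℕ) (ψ : (E → ℕ) → E → ℕ) : Prop :=
  TransInvOn (IsGrey m) ψ ∧ LocalOn (IsGrey m) W ψ

/-- A set W-operator : translation-invariant and locally defined within `W`. -/
def IsSetWOp (W : E → ℕ) (ψ : (E → ℕ) → E → ℕ) : Prop :=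
  TransInvOn IsBinary ψ ∧ LocalOn IsBinary W ψ

private lemma sInf_image_of_monotone {f : ℕ → ℕ} (hf : Monotone f) {S : Set ℕ}
    (hS : S.Nonempty) : sInf (f '' S) = f (sInf S) := by
  refine le_antisymm (Nat.sInf_le ⟨_, Nat.sInf_mem hS, rfl⟩) ?_
  refine le_csInf (hS.image f) ?_
  rintro b ⟨a, ha, rfl⟩
  exact hf (Nat.sInf_le ha)

private lemma comb_lemma (m : ℕ) {I : Type} (a : I → ℕ → ℕ)
    (hb : ∀ i t, a i t ≤ 1) (hanti : ∀ i s t, s ≤ t → a i t ≤ a i s) :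
    ∑ t ∈ Finset.Icc 1 m, sInf (insert 1 (Set.range fun i => a i t)) =
      sInf (insert m (Set.range fun i => ∑ t ∈ Finset.Icc 1 m, a i t)) := by
  set c : ℕ → ℕ := fun t => sInf (insert 1 (Set.range fun i => a i t)) with hc
  have hc1 : ∀ t, c t ≤ 1 := fun t => Nat.sInf_le (Set.mem_insert _ _)
  have hca : ∀ t i, c t ≤ a i t := fun t i =>
    Nat.sInf_le (Set.mem_insert_iff.2 (Or.inr ⟨i, rfl⟩))
  have hIcc : Finset.Icc 1 m = Finset.Ioc 0 m := rfl
  refine le_antisymm ?_ ?_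
  · refine le_csInf ⟨m, Set.mem_insert _ _⟩ ?_
    rintro b hb'
    rcases Set.mem_insert_iff.1 hb' with hbm | ⟨i, rfl⟩
    · rw [hbm]
      calc ∑ t ∈ Finset.Icc 1 m, c t ≤ ∑ _t ∈ Finset.Icc 1 m, 1 :=
            Finset.sum_le_sum fun t _ => hc1 t
        _ = m := by simp
    · exact Finset.sum_le_sum fun t _ => hca t i
  · by_cases hall : ∀ t ∈ Finset.Icc 1 m, c t = 1
    · have hcm : ∑ t ∈ Finset.Icc 1 m, c t = m := by
        rw [Finset.sum_congr rfl hall]; simp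
      rw [hcm]
      exact Nat.sInf_le (Set.mem_insert _ _)
    · push_neg at hall
      obtain ⟨t1, ht1, ht1'⟩ := hall
      have ht1c : c t1 = 0 := Nat.lt_one_iff.1 (lt_of_le_of_ne (hc1 t1) ht1')
      have hSne : {t | 1 ≤ t ∧ c t = 0}.Nonempty := ⟨t1, (Finset.mem_Icc.1 ht1).1, ht1c⟩
      set t0 := sInf {t | 1 ≤ t ∧ c t = 0} with ht0def
      obtain ⟨ht01, ht0c⟩ : 1 ≤ t0 ∧ c t0 = 0 := Nat.sInf_mem hSne
      have ht0le : t0 ≤ t1 := Nat.sInf_le ⟨(Finset.mem_Icc.1 ht1).1, ht1c⟩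
      have ht0m : t0 ≤ m := ht0le.trans (Finset.mem_Icc.1 ht1).2
      have h0mem : (0 : ℕ) ∈ insert 1 (Set.range fun i => a i t0) := by
        rw [← ht0c]
        exact Nat.sInf_mem ⟨1, Set.mem_insert _ _⟩
      obtain ⟨i0, hi0⟩ : ∃ i, a i t0 = 0 := by
        rcases Set.mem_insert_iff.1 h0mem with h | ⟨i, hi⟩
        · exact absurd h.symm one_ne_zero
        · exact ⟨i, hi⟩
      refine le_trans (Nat.sInf_le (Set.mem_insert_iff.2 (Or.inr ⟨i0, rfl⟩))) ?_
      have hsplit : ∀ b : ℕ → ℕ, ∑ t ∈ Finset.Icc 1 m, b t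
          = ∑ t ∈ Finset.Ioc 0 (t0 - 1), b t + ∑ t ∈ Finset.Ioc (t0 - 1) m, b t := by
        intro b
        rw [hIcc, Finset.sum_Ioc_consecutive _ (Nat.zero_le _)
          (le_trans (Nat.sub_le _ _) ht0m)]
      have ha0 : ∀ t ∈ Finset.Ioc (t0 - 1) m, a i0 t = 0 := by
        intro t ht
        have h1 := (Finset.mem_Ioc.1 ht).1
        have ht0t : t0 ≤ t := by omega
        have := hanti i0 t0 t ht0t
        omega
      have hsum_a : ∑ t ∈ Finset.Icc 1 m, a i0 t ≤ t0 - 1 := by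
        rw [hsplit, Finset.sum_eq_zero ha0, add_zero]
        calc ∑ t ∈ Finset.Ioc 0 (t0 - 1), a i0 t ≤ ∑ _t ∈ Finset.Ioc 0 (t0 - 1), 1 :=
              Finset.sum_le_sum fun t _ => hb i0 t
          _ = t0 - 1 := by simp
      have hc_eq : ∀ t ∈ Finset.Ioc 0 (t0 - 1), c t = 1 := by
        intro t ht
        rcases Finset.mem_Ioc.1 ht with ⟨h1, h2⟩
        by_contra hne
        have hc0 : c t = 0 := Nat.lt_one_iff.1 (lt_of_le_of_ne (hc1 t) hne)
        have : t0 ≤ t := Nat.sInf_le ⟨h1, hc0⟩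
        omega
      have hsum_c : t0 - 1 ≤ ∑ t ∈ Finset.Icc 1 m, c t := by
        rw [hsplit c]
        calc t0 - 1 = ∑ _t ∈ Finset.Ioc 0 (t0 - 1), 1 := by simp
          _ = ∑ t ∈ Finset.Ioc 0 (t0 - 1), c t := (Finset.sum_congr rfl hc_eq).symm
          _ ≤ _ := Nat.le_add_right _ _
      exact hsum_a.trans hsum_c

/-- Theorem 1 (5): a stack W-operator is an erosion iff its characteristic set operator is. -/
theorem stack_erosion_iff {E : Type*} [AddCommGroup E] [Countable E]
    (m : ℕ) (hm : 0 < m) (W : E → ℕ) (hW : IsBinary W)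
    (ψ : (E → ℕ) → E → ℕ) (hstack : IsStackOp m ψ) (hWop : IsWOp m W ψ) :
    ErosionOn m ψ ↔ ErosionOn 1 (charOp m ψ) := by
  obtain ⟨himg, hbin, hsum⟩ := hstack
  -- basic facts about the characteristic operator
  have hmul : ∀ X : E → ℕ, IsBinary X → ∀ x,
      ψ (fun y => m * X y) x = m * charOp m ψ X x := by
    intro X hX x
    rcases hbin X hX x with h | h <;> simp [charOp, h, Nat.div_self hm]
  have hchar_bin : ∀ X : E → ℕ, IsBinary X → ∀ x,
      charOp m ψ X x ≤ 1 := by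
    intro X hX x
    rcases hbin X hX x with h | h <;> simp [charOp, h, Nat.div_self hm]
  have hth : ∀ (t : ℕ) (f : E → ℕ), IsBinary (thresh t f) := by
    intro t f y
    unfold thresh; split <;> simp
  have hkey : ∀ f, IsGrey m f → ∀ x,
      ψ f x = ∑ t ∈ Finset.Icc 1 m, charOp m ψ (thresh t f) x := by
    intro f hf x
    have h := hsum f hf x
    rw [Finset.sum_congr rfl (fun t _ => hmul _ (hth t f) x), ← Finset.mul_sum] at h
    exact Nat.eq_of_mul_eq_mul_left hm h
  constructor
  · -- ψ erosion → ψ̃ erosion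
    intro hero I X hX
    have hF : ∀ i x, m * X i x ≤ m := by
      intro i x
      calc m * X i x ≤ m * 1 := Nat.mul_le_mul_left m (hX i x)
        _ = m := mul_one m
    have hmono1 : Monotone (fun n => m * n) := fun a b h => Nat.mul_le_mul_left m h
    have hmono2 : Monotone (fun n => n / m) := fun a b h => Nat.div_le_div_right h
    have hmulinf : (fun y => m * famInf 1 X y) = famInf m (fun i y => m * X i y) := by
      funext y
      unfold famInf
      rw [← sInf_image_of_monotone hmono1 ⟨1, Set.mem_insert _ _⟩,
        Set.image_insert_eq, mul_one, ← Set.range_comp]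
      rfl
    funext x
    show ψ (fun y => m * famInf 1 X y) x / m = _
    rw [hmulinf, hero I (fun i y => m * X i y) hF]
    unfold famInf
    show sInf (insert m (Set.range fun i => ψ (fun y => m * X i y) x)) / m = _
    rw [← sInf_image_of_monotone hmono2 ⟨m, Set.mem_insert _ _⟩,
      Set.image_insert_eq, Nat.div_self hm, ← Set.range_comp]
    rfl
  · -- ψ̃ erosion → ψ erosion
    intro hero I F hF
    have hinfgrey : IsGrey m (famInf m F) := fun x => Nat.sInf_le (Set.mem_insert _ _)
    -- monotonicity of the characteristic operator
    have hmono : ∀ X Y : E → ℕ, IsBinary X → IsBinary Y → (∀ x, X x ≤ Y x) →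
        ∀ x, charOp m ψ X x ≤ charOp m ψ Y x := by
      intro X Y hX hY hXY x
      have hfam : famInf 1 (fun b : Bool => if b then Y else X) = X := by
        funext y
        unfold famInf
        refine le_antisymm (Nat.sInf_le (Set.mem_insert_iff.2 (Or.inr ⟨false, by simp⟩))) ?_
        refine le_csInf ⟨1, Set.mem_insert _ _⟩ ?_
        rintro b hb'
        rcases Set.mem_insert_iff.1 hb' with hb1 | ⟨i, rfl⟩
        · rw [hb1]; exact hX y
        · cases i
          · simp
          · simpa using hXY y
      have h := hero Bool (fun b => if b then Y else X)
        (by intro b x'; cases b; exacts [hX x', hY x'])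
      rw [hfam] at h
      rw [congrFun h x]
      have : charOp m ψ Y x ∈ insert 1 (Set.range fun b : Bool =>
          charOp m ψ (if b then Y else X) x) :=
        Set.mem_insert_iff.2 (Or.inr ⟨true, by simp⟩)
      exact Nat.sInf_le this
    -- threshold commutes with infima
    have hthreshinf : ∀ t, t ≤ m →
        thresh t (famInf m F) = famInf 1 (fun i => thresh t (F i)) := by
      intro t ht
      funext x
      simp only [thresh, famInf]
      by_cases hall : ∀ i, t ≤ F i x
      · have h1 : t ≤ sInf (insert m (Set.range fun i => F i x)) := by
          refine le_csInf ⟨m, Set.mem_insert _ _⟩ ?_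
          rintro b hb'
          rcases Set.mem_insert_iff.1 hb' with hb1 | ⟨i, rfl⟩
          · rw [hb1]; exact ht
          · exact hall i
        simp only [h1, ↓reduceIte]
        refine (le_antisymm (Nat.sInf_le (Set.mem_insert _ _)) ?_).symm
        refine le_csInf ⟨1, Set.mem_insert _ _⟩ ?_
        rintro b hb'
        rcases Set.mem_insert_iff.1 hb' with hb1 | ⟨i, rfl⟩
        · rw [hb1]
        · simp [hall i]
      · push_neg at hall
        obtain ⟨i, hi⟩ := hall
        have h1 : ¬ t ≤ sInf (insert m (Set.range fun i => F i x)) := fun hcon =>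
          absurd (hcon.trans (Nat.sInf_le (Set.mem_insert_iff.2 (Or.inr ⟨i, rfl⟩))))
            (not_le.2 hi)
        simp only [h1, ↓reduceIte]
        refine (Nat.eq_zero_of_le_zero (Nat.sInf_le ?_)).symm
        exact Set.mem_insert_iff.2 (Or.inr ⟨i, by simp [not_le.2 hi]⟩)
    funext x
    have lhs : ψ (famInf m F) x = ∑ t ∈ Finset.Icc 1 m,
        sInf (insert 1 (Set.range fun i => charOp m ψ (thresh t (F i)) x)) := by
      rw [hkey _ hinfgrey x]
      refine Finset.sum_congr rfl fun t ht => ?_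
      rw [hthreshinf t (Finset.mem_Icc.1 ht).2,
        hero I (fun i => thresh t (F i)) (fun i y => hth t (F i) y)]
      rfl
    have rhs : famInf m (fun i => ψ (F i)) x = sInf (insert m
        (Set.range fun i => ∑ t ∈ Finset.Icc 1 m, charOp m ψ (thresh t (F i)) x)) := by
      unfold famInf
      have : (fun i => ψ (F i) x)
          = fun i => ∑ t ∈ Finset.Icc 1 m, charOp m ψ (thresh t (F i)) x :=
        funext fun i => hkey (F i) (hF i) x
      rw [this]
    rw [lhs, rhs]
    exact comb_lemma m (fun i t => charOp m ψ (thresh t (F i)) x)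
      (fun i t => hchar_bin _ (hth t (F i)) x)
      (fun i s t hst => hmono _ _ (hth t (F i)) (hth s (F i))
        (fun y => by
          simp only [thresh]
          split
          · rw [if_pos (hst.trans (by assumption))]
          · simp) x)


end StackMM
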